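/- arXiv:1507.00552 — 2 statements merged into one kernel-verified Lean document; each statement's English description precedes it below -/
import Mathlib

section
/- Let X be a random variable taking values in the nonnegative integers with E[X] = 1 and Var[X] ≤ v for some real number v > 0. Then P(X ≥ 1) ≥ 1/(8v + 4). -/
open MeasureTheory ProbabilityTheory

/-- Chebyshev-based anti-concentration: a nonnegative-integer-valued random variable with mean 1
and variance at most `v > 0` is at least 1 with probability at least `1 / (8 * v + 4)`. -/
theorem stmt_3 {Ω : Type*} {m0 : MeasurableSpace Ω} (μ : Measure Ω) [IsProbabilityMeasure μ]
    (X : Ω → ℕ) (hX : Measurable X)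
    (hXsq : MemLp (fun ω => (X ω : ℝ)) 2 μ)
    (hmean : ∫ ω, (X ω : ℝ) ∂μ = 1)
    (v : ℝ) (hv : 0 < v)
    (hvar : variance (fun ω => (X ω : ℝ)) μ ≤ v) :
    ENNReal.ofReal (1 / (8 * v + 4)) ≤ μ {ω | 1 ≤ X ω} := by
  set S : Set Ω := {ω | 1 ≤ X ω} with hS_def
  have hS : MeasurableSet S := hX measurableSet_Ici
  set g : Ω → ℝ := S.indicator (fun _ => (1 : ℝ)) with hg_def
  have hg_mem : MemLp g 2 μ := memLp_indicator_const 2 hS 1 (Or.inr (measure_ne_top μ S))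
  have hfg : ∀ ω, (X ω : ℝ) * g ω = (X ω : ℝ) := by
    intro ω
    by_cases h : ω ∈ S
    · simp [hg_def, h]
    · have : X ω = 0 := by
        simp only [hS_def, Set.mem_setOf_eq, not_le, Nat.lt_one_iff] at h
        exact h
      simp [this]
  set P : ℝ := (μ S).toReal with hP_def
  have hP0 : 0 ≤ P := ENNReal.toReal_nonneg
  have hg_sq : ∀ ω, g ω ^ 2 = g ω := by
    intro ω
    by_cases h : ω ∈ S <;> simp [hg_def, h]
  have hint_g : ∫ ω, g ω ^ 2 ∂μ = P := by
    simp only [hg_sq]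
    rw [hg_def, integral_indicator_const _ hS]
    simp [hP_def]
    rfl
  have hA : ∫ ω, (X ω : ℝ) ^ 2 ∂μ ≤ v + 1 := by
    have hv' := variance_eq_sub hXsq
    simp only [Pi.pow_apply] at hv'
    rw [hmean] at hv'
    have h3 : ∫ ω, (X ω : ℝ) ^ 2 ∂μ = variance (fun ω => (X ω : ℝ)) μ + 1 := by
      rw [hv']; ring
    rw [h3]
    linarith
  have hA0 : 0 ≤ ∫ ω, (X ω : ℝ) ^ 2 ∂μ :=
    integral_nonneg fun ω => by positivity
  -- Cauchy-Schwarz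
  have hpq : (2:ℝ).HolderConjugate 2 := Real.HolderConjugate.two_two
  have hcs := integral_mul_le_Lp_mul_Lq_of_nonneg (μ := μ) hpq
    (f := fun ω => (X ω : ℝ)) (g := g)
    (Filter.Eventually.of_forall fun ω => by positivity)
    (Filter.Eventually.of_forall fun ω => Set.indicator_nonneg (fun _ _ => zero_le_one) ω)
    (by rw [show ENNReal.ofReal (2:ℝ) = 2 by norm_num]; exact hXsq)
    (by rw [show ENNReal.ofReal (2:ℝ) = 2 by norm_num]; exact hg_mem)
  simp only [Real.rpow_two, hfg, hmean, hint_g] at hcs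
  -- 1 ≤ A^(1/2) * P^(1/2) with A ≤ v+1
  have key : 1 ≤ (v + 1) * P := by
    set A := ∫ ω, (X ω : ℝ) ^ 2 ∂μ with hA_def
    have h1 : (1:ℝ) ≤ (A * P) ^ ((1:ℝ)/2) := by
      rwa [Real.mul_rpow hA0 hP0]
    have h2 : ((A * P) ^ ((1:ℝ)/2)) ^ (2:ℝ) = A * P := by
      rw [← Real.rpow_mul (by positivity)]
      norm_num
    have h3 : (1:ℝ) ≤ A * P := by
      calc (1:ℝ) = 1 ^ (2:ℝ) := by norm_num
      _ ≤ ((A * P) ^ ((1:ℝ)/2)) ^ (2:ℝ) :=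
          Real.rpow_le_rpow (by norm_num) h1 (by norm_num)
      _ = A * P := h2
    calc (1:ℝ) ≤ A * P := h3
    _ ≤ (v + 1) * P := mul_le_mul_of_nonneg_right hA hP0
  have hfinal : 1 / (8 * v + 4) ≤ P := by
    rw [div_le_iff₀ (by linarith)]
    nlinarith
  exact ENNReal.ofReal_le_of_le_toReal hfinal
end

section
/- Let (Ω, ℱ, P) be a probability space with a filtration (ℱ_i)_{i∈ℕ}, and let (Z_i)_{i∈ℕ} be a sequence of square-integrable random variables taking values in the nonnegative integers, adapted to (ℱ_i), such that Z_0 = 1 almost surely, E[Z_{i+1} | ℱ_i] = Z_i almost surely, and E[(Z_{i+1} − Z_i)² | ℱ_i] ≤ 2·Z_i almost surely for every i. Then for every integer i ≥ 1, P(Z_i ≥ 1) ≥ 1/(16i + 4). -/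
open MeasureTheory ProbabilityTheory

/-- Survival probability of a critical integer-valued martingale branching process with
per-step conditional variance at most `2 * Z i`: `P(Z i ≥ 1) ≥ 1 / (16 * i + 4)` for `i ≥ 1`. -/
theorem stmt_4 {Ω : Type*} {m0 : MeasurableSpace Ω} (μ : Measure Ω) [IsProbabilityMeasure μ]
    (ℱ : Filtration ℕ m0) (Z : ℕ → Ω → ℕ)
    (hZsq : ∀ i, MemLp (fun ω => (Z i ω : ℝ)) 2 μ)
    (hZadapted : Adapted ℱ (fun i ω => (Z i ω : ℝ)))
    (hZ0 : Z 0 =ᵐ[μ] fun _ => (1 : ℕ))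
    (hmean : ∀ i, μ[(fun ω => (Z (i + 1) ω : ℝ)) | ℱ i] =ᵐ[μ] fun ω => (Z i ω : ℝ))
    (hvar : ∀ i, μ[(fun ω => ((Z (i + 1) ω : ℝ) - (Z i ω : ℝ)) ^ 2) | ℱ i] ≤ᵐ[μ]
      fun ω => 2 * (Z i ω : ℝ)) :
    ∀ i : ℕ, 1 ≤ i →
      ENNReal.ofReal (1 / (16 * (i : ℝ) + 4)) ≤ μ {ω | 1 ≤ Z i ω} := by
  have hInt : ∀ i, Integrable (fun ω => (Z i ω : ℝ)) μ :=
    fun i => (hZsq i).integrable one_le_two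
  have hIntSq : ∀ i, Integrable (fun ω => (Z i ω : ℝ) ^ 2) μ :=
    fun i => (hZsq i).integrable_sq
  -- mean is 1 for all i
  have hmean_int : ∀ i, ∫ ω, (Z i ω : ℝ) ∂μ = 1 := by
    intro i
    induction i with
    | zero =>
      have h0 : (fun ω => (Z 0 ω : ℝ)) =ᵐ[μ] fun _ => (1 : ℝ) :=
        hZ0.mono fun ω h => by simp [h]
      rw [integral_congr_ae h0]
      simp
    | succ n ih =>
      rw [← integral_condExp (μ := μ) (f := fun ω => (Z (n + 1) ω : ℝ)) (ℱ.le n),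
        integral_congr_ae (hmean n), ih]
  -- second moment bound
  have hsq_bound : ∀ i, ∫ ω, (Z i ω : ℝ) ^ 2 ∂μ ≤ 2 * i + 1 := by
    intro i
    induction i with
    | zero =>
      have h0 : (fun ω => (Z 0 ω : ℝ) ^ 2) =ᵐ[μ] fun _ => (1 : ℝ) :=
        hZ0.mono fun ω h => by simp [h]
      rw [integral_congr_ae h0]
      simp
    | succ n ih =>
      set f : Ω → ℝ := fun ω => (Z n ω : ℝ) with hf
      set g : Ω → ℝ := fun ω => (Z (n + 1) ω : ℝ) with hg
      have hΔ2 : MemLp (fun ω => g ω - f ω) 2 μ := (hZsq (n + 1)).sub (hZsq n)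
      have hIntΔsq : Integrable (fun ω => (g ω - f ω) ^ 2) μ := hΔ2.integrable_sq
      -- integrability of the cross term
      have hIntCross : Integrable (fun ω => f ω * (g ω - f ω)) μ := by
        have h1 : Integrable (fun ω => ((f ω + (g ω - f ω)) ^ 2 - f ω ^ 2
            - (g ω - f ω) ^ 2) / 2) μ :=
          ((((hZsq n).add hΔ2).integrable_sq.sub (hIntSq n)).sub hIntΔsq).div_const 2
        exact h1.congr (Filter.Eventually.of_forall fun ω => by ring)
      -- conditional expectation of the increment vanishes
      have hfc : μ[f | ℱ n] = f :=
        condExp_of_stronglyMeasurable (ℱ.le n) (hZadapted n).stronglyMeasurable (hInt n)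
      have hΔcond : μ[(fun ω => g ω - f ω) | ℱ n] =ᵐ[μ] fun _ => (0 : ℝ) := by
        have heq : (fun ω => g ω - f ω) = g - f := rfl
        rw [heq]
        filter_upwards [condExp_sub (hInt (n + 1)) (hInt n) (m := ℱ n), hmean n]
          with ω h1 h3
        rw [h1]
        simp only [Pi.sub_apply]
        rw [h3, hfc]
        ring
      -- cross term integral is zero
      have hcross : ∫ ω, f ω * (g ω - f ω) ∂μ = 0 := by
        rw [← integral_condExp (μ := μ) (f := fun ω => f ω * (g ω - f ω)) (ℱ.le n)]
        have hpull := condExp_mul_of_stronglyMeasurable_left (hZadapted n).stronglyMeasurable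
          (m := ℱ n) (g := fun ω => g ω - f ω)
          hIntCross ((hInt (n + 1)).sub (hInt n))
        have hzero : μ[(fun ω => f ω * (g ω - f ω)) | ℱ n] =ᵐ[μ] fun _ => (0 : ℝ) := by
          filter_upwards [hpull, hΔcond] with ω h1 h2
          rw [show (fun ω => f ω * (g ω - f ω)) = f * fun ω => g ω - f ω from rfl, h1,
            Pi.mul_apply, h2]
          ring
        rw [integral_congr_ae hzero, integral_zero]
      -- increment second moment ≤ 2
      have hΔsq : ∫ ω, (g ω - f ω) ^ 2 ∂μ ≤ 2 := by
        rw [← integral_condExp (μ := μ) (f := fun ω => (g ω - f ω) ^ 2) (ℱ.le n)]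
        calc ∫ ω, (μ[(fun ω => (g ω - f ω) ^ 2) | ℱ n]) ω ∂μ
            ≤ ∫ ω, 2 * f ω ∂μ := by
              refine integral_mono_ae integrable_condExp ((hInt n).const_mul 2) ?_
              exact hvar n
          _ = 2 := by rw [integral_const_mul, hmean_int n]; norm_num
      -- put everything together
      have hexp : ∫ ω, g ω ^ 2 ∂μ
          = ∫ ω, f ω ^ 2 ∂μ + 2 * ∫ ω, f ω * (g ω - f ω) ∂μ
            + ∫ ω, (g ω - f ω) ^ 2 ∂μ := by
        have h1 : (fun ω => g ω ^ 2)
            = fun ω => f ω ^ 2 + 2 * (f ω * (g ω - f ω)) + (g ω - f ω) ^ 2 :=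
          funext fun ω => by ring
        have hIf2 : Integrable (fun ω => f ω ^ 2) μ := hIntSq n
        have hI12 : Integrable (fun ω => f ω ^ 2 + 2 * (f ω * (g ω - f ω))) μ :=
          hIf2.add (hIntCross.const_mul 2)
        rw [h1, integral_add hI12 hIntΔsq,
          integral_add hIf2 (hIntCross.const_mul 2), integral_const_mul]
      have hfin : ∫ ω, g ω ^ 2 ∂μ ≤ 2 * ((n : ℝ) + 1) + 1 := by
        rw [hexp, hcross]
        linarith [ih]
      calc ∫ ω, ((Z (n + 1) ω : ℝ)) ^ 2 ∂μ ≤ 2 * ((n : ℝ) + 1) + 1 := hfin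
        _ = 2 * ((n + 1 : ℕ) : ℝ) + 1 := by push_cast; ring
  -- Paley–Zygmund style argument via pointwise AM–GM
  intro i hi
  set A : Set Ω := {ω | 1 ≤ Z i ω} with hA
  have hAmeas : MeasurableSet A := by
    have hm : Measurable fun ω => (Z i ω : ℝ) :=
      (hZadapted i).mono (ℱ.le i) le_rfl
    have : A = (fun ω => (Z i ω : ℝ)) ⁻¹' (Set.Ici 1) := by
      ext ω
      simp [hA, Set.mem_preimage, Nat.one_le_cast]
    rw [this]
    exact hm measurableSet_Ici
  set t : ℝ := 2 * (i : ℝ) + 1 with ht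
  have ht_pos : 0 < t := by positivity
  clear_value t
  have h2t : (0 : ℝ) < 2 * t := by positivity
  -- pointwise: Z i ω ≤ (Z i ω)^2 / (2t) + (t/2) * 1_A
  have hpt : ∀ ω, (Z i ω : ℝ) ≤ (Z i ω : ℝ) ^ 2 / (2 * t)
      + A.indicator (fun _ => t / 2) ω := by
    intro ω
    by_cases hω : ω ∈ A
    · rw [Set.indicator_of_mem hω]
      calc (Z i ω : ℝ) ≤ ((Z i ω : ℝ) ^ 2 + t ^ 2) / (2 * t) := by
            rw [le_div_iff₀ h2t]
            nlinarith [sq_nonneg ((Z i ω : ℝ) - t)]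
        _ = (Z i ω : ℝ) ^ 2 / (2 * t) + t / 2 := by
            field_simp
    · rw [Set.indicator_of_notMem hω]
      have hz : Z i ω = 0 := by
        simp only [hA, Set.mem_setOf_eq, not_le, Nat.lt_one_iff] at hω
        exact hω
      simp [hz]
  -- integrate
  have hIntInd : Integrable (A.indicator fun _ => t / 2) μ :=
    (integrable_const (t / 2)).indicator hAmeas
  have hintineq : (1 : ℝ) ≤ (2 * (i : ℝ) + 1) / (2 * t) + (t / 2) * (μ A).toReal := by
    have h1 : ∫ ω, (Z i ω : ℝ) ∂μ
        ≤ ∫ ω, ((Z i ω : ℝ) ^ 2 / (2 * t) + A.indicator (fun _ => t / 2) ω) ∂μ :=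
      integral_mono (hInt i) (((hIntSq i).div_const _).add hIntInd) fun ω => hpt ω
    rw [hmean_int i, integral_add ((hIntSq i).div_const _) hIntInd] at h1
    have h2 : ∫ ω, (Z i ω : ℝ) ^ 2 / (2 * t) ∂μ ≤ (2 * (i : ℝ) + 1) / (2 * t) := by
      rw [integral_div]
      exact div_le_div_of_nonneg_right (hsq_bound i) h2t.le
    have h3 : ∫ ω, A.indicator (fun _ => t / 2) ω ∂μ = (μ A).toReal * (t / 2) := by
      rw [integral_indicator_const _ hAmeas]
      simp [smul_eq_mul]
      exact Or.inl rfl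
    rw [h3] at h1
    linarith
  -- conclude
  have hμA : (1 : ℝ) / t ≤ (μ A).toReal := by
    have htt : (2 * (i : ℝ) + 1) / (2 * t) = 1 / 2 := by
      rw [ht]; field_simp
    rw [htt] at hintineq
    have h4 : (1 : ℝ) ≤ t * (μ A).toReal := by nlinarith [hintineq]
    rw [div_le_iff₀ ht_pos]
    nlinarith [h4]
  have hAfin : μ A ≠ ⊤ := measure_ne_top μ A
  have hle2 : (1 : ℝ) / (16 * (i : ℝ) + 4) ≤ 1 / t := by
    apply one_div_le_one_div_of_le ht_pos
    have h1i : (1 : ℝ) ≤ (i : ℝ) := by exact_mod_cast hi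
    rw [ht]; linarith
  calc ENNReal.ofReal (1 / (16 * (i : ℝ) + 4))
      ≤ ENNReal.ofReal ((μ A).toReal) := ENNReal.ofReal_le_ofReal (hle2.trans hμA)
    _ = μ A := ENNReal.ofReal_toReal hAfin
end
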